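/- Let Γ be a graded graph and let φ be an indecomposable harmonic function on Γ that is either finite or semifinite. Then the support supp(φ) = {λ ∈ Γ : φ(λ) > 0} is a saturated coideal of Γ, and it is primitive. -/

import Mathlib

/-!
Common definitions: graded graphs, ideals and coideals, harmonic functions and the
cone `K⁺`, finite / semifinite / indecomposable harmonic functions.
-/

open scoped ENNReal NNReal

namespace Zigzag

/-- A graded graph: vertices partitioned into finite levels, oriented edges going up
one level, every vertex having at least one outgoing edge. -/
structure GradedGraph where
  V : Type
  rank : V → ℕ
  adj : V → V → Prop
  rank_adj : ∀ ⦃x y⦄, adj x y → rank y = rank x + 1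
  finLevels : ∀ n : ℕ, {x : V | rank x = n}.Finite
  outEdge : ∀ x : V, ∃ y, adj x y

namespace GradedGraph

variable (G : GradedGraph)

/-- `x ≤ y`: `y` is reachable from `x` by a directed path (possibly trivial). -/
def le (x y : G.V) : Prop := Relation.ReflTransGen G.adj x y

/-- The finset of upper neighbours of a vertex. -/
noncomputable def upFinset (x : G.V) : Finset G.V :=
  ((G.finLevels (G.rank x + 1)).subset fun _ hy => G.rank_adj hy).toFinset

/-- A coideal: closed under going down. -/
def IsCoideal (J : Set G.V) : Prop := ∀ a ∈ J, ∀ b, G.le b a → b ∈ J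

/-- A saturated coideal: a coideal in which every vertex has an upper neighbour. -/
def IsSatCoideal (J : Set G.V) : Prop :=
  G.IsCoideal J ∧ ∀ a ∈ J, ∃ b ∈ J, G.adj a b

/-- A primitive saturated coideal: a saturated coideal which is not the union of two
strictly smaller saturated coideals. -/
def IsPrimCoideal (J : Set G.V) : Prop :=
  G.IsSatCoideal J ∧ ∀ J₁ J₂ : Set G.V, G.IsSatCoideal J₁ → G.IsSatCoideal J₂ →
    J = J₁ ∪ J₂ → J = J₁ ∨ J = J₂

/-- An ideal: closed under going up. -/
def IsIdeal (I : Set G.V) : Prop := ∀ a ∈ I, ∀ b, G.le a b → b ∈ I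

/-- A `[0,∞]`-valued function on the vertices is harmonic if its value at any vertex
equals the sum of its values at the upper neighbours. -/
def Harmonic (φ : G.V → ℝ≥0∞) : Prop := ∀ x, φ x = ∑ y ∈ G.upFinset x, φ y

/-- The relation `λ = ∑_{μ : λ ↗ μ} μ` as an element of the free module. -/
noncomputable def relOf (x : G.V) : G.V →₀ ℝ :=
  Finsupp.single x 1 - ∑ y ∈ G.upFinset x, Finsupp.single y 1

/-- The submodule of relations defining `K(Γ)`. -/
noncomputable def Krel : Submodule ℝ (G.V →₀ ℝ) :=
  Submodule.span ℝ (Set.range G.relOf)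

/-- The class of `f` in `K(Γ)`. -/
noncomputable def kmk (f : G.V →₀ ℝ) : (G.V →₀ ℝ) ⧸ G.Krel :=
  Submodule.Quotient.mk f

/-- The cone `K⁺(Γ)` spanned by the vertices in `K(Γ)`. -/
noncomputable def Kpos : Set ((G.V →₀ ℝ) ⧸ G.Krel) :=
  G.kmk '' {f | ∀ x, 0 ≤ f x}

/-- The order defined by the cone: `x ≤_K y` iff `y − x ∈ K⁺(Γ)`. -/
def leK (x y : (G.V →₀ ℝ) ⧸ G.Krel) : Prop := y - x ∈ G.Kpos

/-- The value of (the canonical extension of) `φ` at a nonnegative combination of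
vertices. -/
noncomputable def phiHat (φ : G.V → ℝ≥0∞) (f : G.V →₀ ℝ) : ℝ≥0∞ :=
  ∑ x ∈ f.support, ENNReal.ofReal (f x) * φ x

/-- `φ` is everywhere finite. -/
def FiniteH (φ : G.V → ℝ≥0∞) : Prop := ∀ x, φ x ≠ ⊤

/-- `φ` is semifinite: not everywhere finite, and its value at any element of the cone
`K⁺(Γ)` is the supremum of its values at the `≤_K`-smaller elements of the cone where
it is finite. -/
def Semifinite (φ : G.V → ℝ≥0∞) : Prop :=
  (∃ x, φ x = ⊤) ∧
  ∀ f : G.V →₀ ℝ, (∀ x, 0 ≤ f x) →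
    G.phiHat φ f =
      ⨆ g ∈ {g : G.V →₀ ℝ |
        (∀ x, 0 ≤ g x) ∧ G.leK (G.kmk g) (G.kmk f) ∧ G.phiHat φ g ≠ ⊤},
        G.phiHat φ g

/-- A semifinite harmonic function `φ` is indecomposable if any finite or semifinite
harmonic function `φ′ ≤ φ` which does not vanish identically on the finiteness ideal
of `φ` is a constant multiple of `φ` on that ideal. -/
def IndecSemifinite (φ : G.V → ℝ≥0∞) : Prop :=
  ∀ φ' : G.V → ℝ≥0∞, G.Harmonic φ' →
    (G.FiniteH φ' ∨ G.Semifinite φ') →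
    (∀ x, φ' x ≤ φ x) →
    (∃ x, φ x ≠ ⊤ ∧ φ' x ≠ 0) →
    ∃ c : ℝ≥0, ∀ x, φ x ≠ ⊤ → φ' x = (c : ℝ≥0∞) * φ x

/-- A finite harmonic function `φ` is indecomposable if any harmonic function
`φ′ ≤ φ` which is not identically zero is a constant multiple of `φ`. -/
def IndecFinite (φ : G.V → ℝ≥0∞) : Prop :=
  ∀ φ' : G.V → ℝ≥0∞, G.Harmonic φ' →
    (∀ x, φ' x ≤ φ x) → (∃ x, φ' x ≠ 0) →
    ∃ c : ℝ≥0, ∀ x, φ' x = (c : ℝ≥0∞) * φ x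

/-- The number of directed paths from `x` to `y` (the shifted dimension
`dim(x, y)`). -/
noncomputable def gdim (x y : G.V) : ℕ :=
  Nat.card {p : List G.V // p.Chain' G.adj ∧ p.head? = some x ∧ p.getLast? = some y}

end GradedGraph

end Zigzag

namespace Zigzag

namespace GradedGraph

open Finsupp ENNReal
open scoped Classical

variable {G : GradedGraph} {φ ψ : G.V → ℝ≥0∞}

lemma mem_upFinset {x y : G.V} : y ∈ G.upFinset x ↔ G.adj x y :=
  Set.Finite.mem_toFinset _

lemma phi_le_of_adj (hφ : G.Harmonic φ) {x y : G.V} (h : G.adj x y) : φ y ≤ φ x := by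
  rw [hφ x]
  exact Finset.single_le_sum (fun i _ => zero_le) (mem_upFinset.2 h)

lemma phi_le_of_le (hφ : G.Harmonic φ) {x y : G.V} (h : G.le x y) : φ y ≤ φ x := by
  induction h with
  | refl => exact le_rfl
  | tail _ hadj ih => exact (phi_le_of_adj hφ hadj).trans ih

lemma phiHat_eq_sum {f : G.V →₀ ℝ} {t : Finset G.V} (h : f.support ⊆ t) :
    G.phiHat φ f = ∑ x ∈ t, ENNReal.ofReal (f x) * φ x :=
  Finset.sum_subset h (fun x _ hx => by
    rw [Finsupp.notMem_support_iff.mp hx, ENNReal.ofReal_zero, zero_mul])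

lemma phiHat_add {f g : G.V →₀ ℝ} (hf : ∀ x, 0 ≤ f x) (hg : ∀ x, 0 ≤ g x) :
    G.phiHat φ (f + g) = G.phiHat φ f + G.phiHat φ g := by
  rw [phiHat_eq_sum (t := f.support ∪ g.support) Finsupp.support_add,
      phiHat_eq_sum (t := f.support ∪ g.support) Finset.subset_union_left,
      phiHat_eq_sum (t := f.support ∪ g.support) Finset.subset_union_right,
      ← Finset.sum_add_distrib]
  refine Finset.sum_congr rfl fun x _ => ?_
  rw [Finsupp.add_apply, ENNReal.ofReal_add (hf x) (hg x), add_mul]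

lemma phiHat_smul {c : ℝ} (hc : 0 ≤ c) (f : G.V →₀ ℝ) :
    G.phiHat φ (c • f) = ENNReal.ofReal c * G.phiHat φ f := by
  rw [phiHat_eq_sum (t := f.support) Finsupp.support_smul, phiHat, Finset.mul_sum]
  refine Finset.sum_congr rfl fun x _ => ?_
  rw [Finsupp.smul_apply, smul_eq_mul, ENNReal.ofReal_mul hc, mul_assoc]

lemma phiHat_finsetSum {ι : Type} (t : Finset ι) (w : ι → G.V →₀ ℝ)
    (hw : ∀ i x, 0 ≤ w i x) :
    G.phiHat φ (∑ i ∈ t, w i) = ∑ i ∈ t, G.phiHat φ (w i) := by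
  classical
  induction t using Finset.cons_induction with
  | empty => simp [phiHat]
  | cons a s ha ih =>
      rw [Finset.sum_cons, Finset.sum_cons,
        phiHat_add (hw a) (fun x => by
          rw [Finsupp.finset_sum_apply]
          exact Finset.sum_nonneg fun i _ => hw i x), ih]

lemma phiHat_single (x : G.V) (c : ℝ) :
    G.phiHat φ (Finsupp.single x c) = ENNReal.ofReal c * φ x := by
  rw [phiHat_eq_sum (t := {x}) Finsupp.support_single_subset, Finset.sum_singleton,
      Finsupp.single_eq_same]

lemma phiHat_mono_left (h : ∀ x, ψ x ≤ φ x) (f : G.V →₀ ℝ) :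
    G.phiHat ψ f ≤ G.phiHat φ f :=
  Finset.sum_le_sum fun x _ => mul_le_mul_right (h x) _

lemma single_one_nonneg (x v : G.V) : (0:ℝ) ≤ (Finsupp.single x (1:ℝ)) v := by
  rw [Finsupp.single_apply]
  split <;> norm_num

/-- Iterated push of a vertex to higher levels. -/
noncomputable def Dpush (G : GradedGraph) : ℕ → G.V → G.V →₀ ℝ
  | 0, z => Finsupp.single z 1
  | k + 1, z => ∑ y ∈ G.upFinset z, G.Dpush k y

lemma Dpush_nonneg (k : ℕ) (z x : G.V) : 0 ≤ G.Dpush k z x := by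
  induction k generalizing z with
  | zero =>
      simp only [Dpush, Finsupp.single_apply]
      split <;> norm_num
  | succ k ih =>
      simp only [Dpush]
      rw [Finsupp.finset_sum_apply]
      exact Finset.sum_nonneg fun y _ => ih y

lemma phiHat_Dpush (hφ : G.Harmonic φ) (k : ℕ) (z : G.V) :
    G.phiHat φ (G.Dpush k z) = φ z := by
  induction k generalizing z with
  | zero =>
      simp only [Dpush]
      rw [phiHat_single, ENNReal.ofReal_one, one_mul]
  | succ k ih =>
      simp only [Dpush]
      rw [phiHat_finsetSum _ _ (fun y x => G.Dpush_nonneg k y x)]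
      exact (Finset.sum_congr rfl fun y _ => ih y).trans (hφ z).symm

lemma filter_nonneg {f : G.V →₀ ℝ} (hf : ∀ x, 0 ≤ f x) (B : Set G.V) (x : G.V) :
    0 ≤ (f.filter (· ∈ B)) x := by
  rw [Finsupp.filter_apply]
  split
  · exact hf x
  · exact le_rfl

lemma filter_finsetSum {ι : Type} (B : Set G.V) (t : Finset ι) (w : ι → G.V →₀ ℝ) :
    ((∑ i ∈ t, w i).filter (· ∈ B)) = ∑ i ∈ t, (w i).filter (· ∈ B) :=
  map_sum (Finsupp.filterAddHom (· ∈ B)) w t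

/-- The (level-wise) pushes of `z`, the mass kept only on `B`. -/
noncomputable def aB (G : GradedGraph) (φ : G.V → ℝ≥0∞) (B : Set G.V) (k : ℕ) (z : G.V) :
    ℝ≥0∞ :=
  G.phiHat φ ((G.Dpush k z).filter (· ∈ B))

/-- The harmonic function obtained from `φ` by sending the mass through `B`. -/
noncomputable def phiB (G : GradedGraph) (φ : G.V → ℝ≥0∞) (B : Set G.V) (z : G.V) : ℝ≥0∞ :=
  ⨅ k, G.aB φ B k z

/-- `B` is downward closed modulo the null set of `φ`. -/
def Star (G : GradedGraph) (φ : G.V → ℝ≥0∞) (B : Set G.V) : Prop :=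
  ∀ ⦃z y⦄, G.adj z y → z ∉ B → y ∈ B → φ y = 0

lemma aB_zero (B : Set G.V) (z : G.V) :
    G.aB φ B 0 z = if z ∈ B then φ z else 0 := by
  rw [aB]
  simp only [Dpush]
  by_cases hz : z ∈ B
  · rw [Finsupp.filter_single_of_pos _ hz, phiHat_single, ENNReal.ofReal_one, one_mul,
      if_pos hz]
  · rw [Finsupp.filter_single_of_neg _ hz, if_neg hz]
    simp [phiHat]

lemma aB_succ (B : Set G.V) (k : ℕ) (z : G.V) :
    G.aB φ B (k + 1) z = ∑ y ∈ G.upFinset z, G.aB φ B k y := by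
  rw [aB]
  simp only [Dpush]
  rw [filter_finsetSum]
  exact phiHat_finsetSum _ _ fun y x => filter_nonneg (G.Dpush_nonneg k y) B x

lemma aB_zero_le (B : Set G.V) (z : G.V) : G.aB φ B 0 z ≤ φ z := by
  rw [aB_zero]
  split
  · exact le_rfl
  · exact zero_le

lemma aB_succ_le (hφ : G.Harmonic φ) {B : Set G.V} (hB : G.Star φ B) (k : ℕ) (z : G.V) :
    G.aB φ B (k + 1) z ≤ G.aB φ B k z := by
  induction k generalizing z with
  | zero =>
      rw [aB_succ, aB_zero]
      by_cases hz : z ∈ B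
      · rw [if_pos hz]
        calc ∑ y ∈ G.upFinset z, G.aB φ B 0 y ≤ ∑ y ∈ G.upFinset z, φ y :=
              Finset.sum_le_sum fun y _ => aB_zero_le B y
          _ = φ z := (hφ z).symm
      · rw [if_neg hz]
        refine le_of_eq (Finset.sum_eq_zero fun y hy => ?_)
        rw [aB_zero]
        split
        · exact hB (mem_upFinset.1 hy) hz ‹_›
        · rfl
  | succ k ih =>
      rw [aB_succ, aB_succ]
      exact Finset.sum_le_sum fun y _ => ih y

lemma aB_antitone (hφ : G.Harmonic φ) {B : Set G.V} (hB : G.Star φ B) (z : G.V) :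
    Antitone fun k => G.aB φ B k z :=
  antitone_nat_of_succ_le fun k => aB_succ_le hφ hB k z

lemma phiB_le (B : Set G.V) (z : G.V) : G.phiB φ B z ≤ φ z :=
  (iInf_le _ 0).trans (aB_zero_le B z)

lemma phiB_eq_zero (B : Set G.V) {z : G.V} (hz : z ∉ B) : G.phiB φ B z = 0 :=
  le_antisymm ((iInf_le _ 0).trans (by rw [aB_zero, if_neg hz])) (zero_le)

lemma phiB_harmonic (hφ : G.Harmonic φ) {B : Set G.V} (hB : G.Star φ B) :
    G.Harmonic (G.phiB φ B) := by
  intro z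
  have h1 : G.phiB φ B z = ⨅ k, G.aB φ B (k + 1) z := by
    refine le_antisymm (le_iInf fun k => iInf_le _ (k + 1))
      (le_iInf fun k => iInf_le_of_le k (aB_succ_le hφ hB k z))
  rw [h1]
  simp only [aB_succ]
  rw [ENNReal.iInf_sum (fun t i j => ⟨max i j, fun y _ =>
    ⟨aB_antitone hφ hB y (le_max_left i j), aB_antitone hφ hB y (le_max_right i j)⟩⟩)]
  rfl

lemma le_phiB_add_phiB (hφ : G.Harmonic φ) {B₁ B₂ : Set G.V}
    (hB₁ : G.Star φ B₁) (hB₂ : G.Star φ B₂)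
    (hcov : ∀ w, φ w ≠ 0 → w ∈ B₁ ∪ B₂) (z : G.V) :
    φ z ≤ G.phiB φ B₁ z + G.phiB φ B₂ z := by
  have key : ∀ k, φ z ≤ G.aB φ B₁ k z + G.aB φ B₂ k z := by
    intro k
    have e0 : φ z = ∑ w ∈ (G.Dpush k z).support, ENNReal.ofReal (G.Dpush k z w) * φ w := by
      rw [← phiHat_Dpush hφ k z]; rfl
    have hsub1 : ((G.Dpush k z).filter (· ∈ B₁)).support ⊆ (G.Dpush k z).support := by
      rw [Finsupp.support_filter]; exact Finset.filter_subset _ _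
    have hsub2 : ((G.Dpush k z).filter (· ∈ B₂)).support ⊆ (G.Dpush k z).support := by
      rw [Finsupp.support_filter]; exact Finset.filter_subset _ _
    rw [e0, aB, aB, phiHat_eq_sum hsub1, phiHat_eq_sum hsub2, ← Finset.sum_add_distrib]
    refine Finset.sum_le_sum fun w _ => ?_
    rw [Finsupp.filter_apply, Finsupp.filter_apply]
    by_cases h0 : φ w = 0
    · simp [h0]
    · rcases hcov w h0 with h1 | h2
      · rw [if_pos h1]; exact le_add_right le_rfl
      · rw [if_pos h2]; exact le_add_left le_rfl
  refine le_trans (le_iInf key) (le_of_eq ?_)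
  exact (ENNReal.iInf_add_iInf fun i j => ⟨max i j,
    add_le_add (aB_antitone hφ hB₁ z (le_max_left i j))
      (aB_antitone hφ hB₂ z (le_max_right i j))⟩).symm

lemma leK_refl (f : G.V →₀ ℝ) : G.leK (G.kmk f) (G.kmk f) := by
  refine ⟨0, fun x => le_rfl, ?_⟩
  rw [sub_self]
  exact Submodule.Quotient.mk_zero _

/-- Monotonicity of the extension of `phiB` along the `K`-order. -/
lemma phiHat_phiB_mono (hφ : G.Harmonic φ) {B : Set G.V} (hB : G.Star φ B)
    {f g : G.V →₀ ℝ} (hf : ∀ x, 0 ≤ f x) (hg : ∀ x, 0 ≤ g x)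
    (hle : G.leK (G.kmk g) (G.kmk f)) :
    G.phiHat (G.phiB φ B) g ≤ G.phiHat (G.phiB φ B) f := by
  obtain ⟨h, hh0, hhk⟩ := hle
  have hh0' : ∀ x, 0 ≤ h x := hh0
  simp only [kmk] at hhk
  have h1 : (Submodule.Quotient.mk (f - g) : _ ⧸ G.Krel) = Submodule.Quotient.mk h := by
    rw [Submodule.Quotient.mk_sub, hhk]
  have hr : f - g - h ∈ Submodule.span ℝ (Set.range G.relOf) :=
    (Submodule.Quotient.eq G.Krel).mp h1
  obtain ⟨c, hc⟩ := Finsupp.mem_span_range_iff_exists_finsupp.mp hr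
  set N := ((f.support ∪ g.support ∪ h.support).sup G.rank) ⊔ ((c.support.sup G.rank) + 1)
    with hN
  set v : ℕ → G.V → (G.V →₀ ℝ) :=
    fun n y => ((G.Dpush (n - G.rank y) y).filter (· ∈ B)) with hv
  set P : ℕ → (G.V →₀ ℝ) →ₗ[ℝ] (G.V →₀ ℝ) :=
    fun n => Finsupp.linearCombination ℝ (v n) with hP
  have hvrel : ∀ n (z : G.V), G.rank z + 1 ≤ n →
      v n z = ∑ y ∈ G.upFinset z, v n y := by
    intro n z hn
    have e1 : n - G.rank z = (n - (G.rank z + 1)) + 1 := by omega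
    simp only [hv]
    rw [e1]
    simp only [Dpush]
    rw [filter_finsetSum]
    refine Finset.sum_congr rfl fun y hy => ?_
    have hr : G.rank y = G.rank z + 1 := G.rank_adj (mem_upFinset.1 hy)
    rw [hr]
  have hPrel : ∀ n (z : G.V), G.rank z + 1 ≤ n → P n (G.relOf z) = 0 := by
    intro n z hn
    simp only [hP, relOf, map_sub, map_sum, Finsupp.linearCombination_single, one_smul]
    rw [hvrel n z hn]
    exact sub_self _
  have hPfgh : ∀ n, (∀ i ∈ c.support, G.rank i + 1 ≤ n) → P n f = P n g + P n h := by
    intro n hn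
    have h0 : P n (f - g - h) = 0 := by
      rw [← hc, Finsupp.sum, map_sum]
      refine Finset.sum_eq_zero fun i hi => ?_
      rw [map_smul, hPrel n i (hn i hi), smul_zero]
    rw [map_sub, map_sub, sub_sub, sub_eq_zero] at h0
    exact h0
  have hPapply : ∀ n (u : G.V →₀ ℝ), P n u = ∑ y ∈ u.support, u y • v n y := by
    intro n u
    rw [hP]
    rw [Finsupp.linearCombination_apply]
    rfl
  have hvnn : ∀ n (y : G.V) (x : G.V), 0 ≤ v n y x :=
    fun n y x => filter_nonneg (G.Dpush_nonneg _ _) _ _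
  have hPnn : ∀ n (u : G.V →₀ ℝ), (∀ x, 0 ≤ u x) → (∀ x, 0 ≤ (P n u) x) := by
    intro n u hu x
    rw [hPapply, Finsupp.finset_sum_apply]
    refine Finset.sum_nonneg fun y _ => ?_
    rw [Finsupp.smul_apply, smul_eq_mul]
    exact mul_nonneg (hu y) (hvnn n y x)
  have hPHat : ∀ n (u : G.V →₀ ℝ), (∀ x, 0 ≤ u x) →
      G.phiHat φ (P n u) =
        ∑ y ∈ u.support, ENNReal.ofReal (u y) * G.aB φ B (n - G.rank y) y := by
    intro n u hu
    rw [hPapply, phiHat_finsetSum _ _ (fun y x => by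
      rw [Finsupp.smul_apply, smul_eq_mul]
      exact mul_nonneg (hu y) (hvnn n y x))]
    exact Finset.sum_congr rfl fun y _ => by rw [phiHat_smul (hu y)]; rfl
  have hcnd : ∀ k, ∀ i ∈ c.support, G.rank i + 1 ≤ N + k := by
    intro k i hi
    have h1 : G.rank i ≤ c.support.sup G.rank := Finset.le_sup hi
    have h2 : c.support.sup G.rank + 1 ≤ N := le_sup_right
    omega
  have hmain : ∀ k, G.phiHat (G.phiB φ B) g ≤
      ∑ y ∈ f.support, ENNReal.ofReal (f y) * G.aB φ B (N + k - G.rank y) y := by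
    intro k
    have e1 : G.phiHat (G.phiB φ B) g ≤ G.phiHat φ (P (N + k) g) := by
      rw [hPHat _ _ hg, phiHat]
      exact Finset.sum_le_sum fun y _ => mul_le_mul_right (iInf_le _ _) _
    have e2 : G.phiHat φ (P (N + k) g) ≤ G.phiHat φ (P (N + k) f) := by
      rw [hPfgh (N + k) (hcnd k), phiHat_add (hPnn _ _ hg) (hPnn _ _ hh0')]
      exact le_self_add
    exact (e1.trans e2).trans (le_of_eq (hPHat _ _ hf))
  refine le_trans (le_iInf hmain) (le_of_eq ?_)
  rw [ENNReal.iInf_sum (f := fun k y => ENNReal.ofReal (f y) * G.aB φ B (N + k - G.rank y) y)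
    (fun t i j => ⟨max i j, fun y _ => ⟨mul_le_mul_right
        (aB_antitone hφ hB y (by omega : N + i - G.rank y ≤ N + max i j - G.rank y)) _,
      mul_le_mul_right
        (aB_antitone hφ hB y (by omega : N + j - G.rank y ≤ N + max i j - G.rank y)) _⟩⟩)]
  refine Finset.sum_congr rfl fun y hy => ?_
  have hfy : ENNReal.ofReal (f y) ≠ 0 := by
    have h1 : f y ≠ 0 := Finsupp.mem_support_iff.mp hy
    have h2 : 0 < f y := lt_of_le_of_ne (hf y) (Ne.symm h1)
    simp [ENNReal.ofReal_eq_zero, not_le, h2]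
  have hry : G.rank y ≤ N := by
    have h1 : G.rank y ≤ (f.support ∪ g.support ∪ h.support).sup G.rank :=
      Finset.le_sup (Finset.mem_union_left _ (Finset.mem_union_left _ hy))
    exact h1.trans le_sup_left
  rw [← ENNReal.mul_iInf_of_ne hfy ENNReal.ofReal_ne_top]
  congr 1
  have hshift : ∀ k, N + k - G.rank y = (N - G.rank y) + k := fun k => by omega
  simp only [hshift]
  refine le_antisymm (le_iInf fun k => iInf_le_of_le k
    (aB_antitone hφ hB y (by omega : k ≤ N - G.rank y + k)))
    (le_iInf fun k => iInf_le _ ((N - G.rank y) + k))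

end GradedGraph

end Zigzag

namespace Zigzag

open GradedGraph Finsupp ENNReal
open scoped Classical

/-- The support of an indecomposable finite or semifinite harmonic
function on a graded graph is a saturated primitive coideal. -/
theorem support_isPrimCoideal (G : GradedGraph) (φ : G.V → ℝ≥0∞)
    (hφ : G.Harmonic φ)
    (h : (G.FiniteH φ ∧ G.IndecFinite φ) ∨ (G.Semifinite φ ∧ G.IndecSemifinite φ)) :
    G.IsSatCoideal {x | φ x ≠ 0} ∧ G.IsPrimCoideal {x | φ x ≠ 0} := by
  classical
  have hcoid : G.IsCoideal {x | φ x ≠ 0} := by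
    intro a ha b hba
    have h1 : φ a ≤ φ b := phi_le_of_le hφ hba
    intro hb0
    exact ha (le_antisymm (by rw [← hb0]; exact h1) (zero_le))
  have hsat : G.IsSatCoideal {x | φ x ≠ 0} := by
    refine ⟨hcoid, fun a ha => ?_⟩
    have h1 : ∑ y ∈ G.upFinset a, φ y ≠ 0 := by rw [← hφ a]; exact ha
    have h2 : ∃ y ∈ G.upFinset a, φ y ≠ 0 := by
      by_contra hall
      push_neg at hall
      exact h1 (Finset.sum_eq_zero hall)
    obtain ⟨y, hy, hy0⟩ := h2
    exact ⟨y, hy0, mem_upFinset.1 hy⟩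
  refine ⟨hsat, hsat, ?_⟩
  intro J₁ J₂ hJ₁ hJ₂ hun
  have hJ₁S : J₁ ⊆ {x | φ x ≠ 0} := by rw [hun]; exact Set.subset_union_left
  have hJ₂S : J₂ ⊆ {x | φ x ≠ 0} := by rw [hun]; exact Set.subset_union_right
  have hstar : ∀ {J : Set G.V}, G.IsCoideal J → G.Star φ J := by
    intro J hJ z y hadj hz hy
    exact absurd (hJ y hy z (Relation.ReflTransGen.single hadj)) hz
  have hstar₁ : G.Star φ J₁ := hstar hJ₁.1
  have hstar₂ : G.Star φ J₂ := hstar hJ₂.1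
  have hcov : ∀ w, φ w ≠ 0 → w ∈ J₁ ∪ J₂ := by
    intro w hw
    rw [← hun]
    exact hw
  have hharm₁ : G.Harmonic (G.phiB φ J₁) := phiB_harmonic hφ hstar₁
  have hle₁ : ∀ x, G.phiB φ J₁ x ≤ φ x := fun x => phiB_le J₁ x
  rcases h with ⟨hfin, hindec⟩ | ⟨hsem, hindec⟩
  · -- finite case
    by_cases hnz : ∃ x, G.phiB φ J₁ x ≠ 0
    · obtain ⟨c, hc⟩ := hindec _ hharm₁ hle₁ hnz
      obtain ⟨x₁, hx₁⟩ := hnz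
      have hc0 : (c : ℝ≥0∞) ≠ 0 := fun h0 => hx₁ (by rw [hc x₁, h0, zero_mul])
      left
      refine Set.Subset.antisymm (fun x hx => ?_) hJ₁S
      have hne : G.phiB φ J₁ x ≠ 0 := by
        rw [hc x]
        exact mul_ne_zero hc0 hx
      by_contra hxJ
      exact hne (phiB_eq_zero _ hxJ)
    · push_neg at hnz
      right
      refine Set.Subset.antisymm (fun x hx => ?_) hJ₂S
      have h1 := le_phiB_add_phiB hφ hstar₁ hstar₂ hcov x
      rw [hnz x, zero_add] at h1
      have hne : G.phiB φ J₂ x ≠ 0 := by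
        intro h0
        exact hx (le_antisymm (by rw [← h0]; exact h1) (zero_le))
      by_contra hxJ
      exact hne (phiB_eq_zero _ hxJ)
  · -- semifinite case
    have hgood : ∀ x, φ x = ⊤ → ∃ (g : G.V →₀ ℝ) (y : G.V), (∀ v, 0 ≤ g v) ∧
        G.leK (G.kmk g) (G.kmk (Finsupp.single x 1)) ∧ G.phiHat φ g ≠ ⊤ ∧
        y ∈ g.support ∧ φ y ≠ 0 ∧ φ y ≠ ⊤ ∧ ENNReal.ofReal (g y) * φ y ≠ 0 := by
      intro x hx
      have h1 := hsem.2 (Finsupp.single x 1) (single_one_nonneg x)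
      rw [phiHat_single, ENNReal.ofReal_one, one_mul, hx] at h1
      have h2 : ∃ g ∈ {g : G.V →₀ ℝ | (∀ v, 0 ≤ g v) ∧
          G.leK (G.kmk g) (G.kmk (Finsupp.single x 1)) ∧ G.phiHat φ g ≠ ⊤},
          G.phiHat φ g ≠ 0 := by
        by_contra hall
        push_neg at hall
        have hle : (⨆ g ∈ {g : G.V →₀ ℝ | (∀ v, 0 ≤ g v) ∧
            G.leK (G.kmk g) (G.kmk (Finsupp.single x 1)) ∧ G.phiHat φ g ≠ ⊤},
            G.phiHat φ g) ≤ 0 :=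
          iSup₂_le fun g hg => le_of_eq (hall g hg)
        rw [← h1] at hle
        simp at hle
      obtain ⟨g, hgmem, hgne⟩ := h2
      obtain ⟨hg0, hgle, hgfin⟩ := hgmem
      have hgne' : ∑ v ∈ g.support, ENNReal.ofReal (g v) * φ v ≠ 0 := hgne
      obtain ⟨y, hy, hyne⟩ := Finset.exists_ne_zero_of_sum_ne_zero hgne'
      have hφy0 : φ y ≠ 0 := fun h0 => hyne (by rw [h0, mul_zero])
      have hterm_le : ENNReal.ofReal (g y) * φ y ≤ G.phiHat φ g := by
        unfold GradedGraph.phiHat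
        exact Finset.single_le_sum (f := fun v => ENNReal.ofReal (g v) * φ v)
          (fun i _ => zero_le) hy
      have hφyt : φ y ≠ ⊤ := by
        intro ht
        have hne0 : ENNReal.ofReal (g y) ≠ 0 := fun h0 => hyne (by rw [h0, zero_mul])
        rw [ht, ENNReal.mul_top hne0] at hterm_le
        exact hgfin (top_le_iff.mp hterm_le)
      exact ⟨g, y, hg0, hgle, hgfin, hy, hφy0, hφyt, hyne⟩
    -- a vertex where φ is finite and positive
    obtain ⟨x₀, hx₀⟩ := hsem.1
    obtain ⟨g₀, y₀, -, -, -, -, hy₀0, hy₀t, -⟩ := hgood x₀ hx₀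
    -- the top-point lemma
    have htop : ∀ (B : Set G.V), G.Star φ B →
        (∀ y, φ y ≠ 0 → φ y ≠ ⊤ → G.phiB φ B y ≠ 0) →
        ∀ x, φ x = ⊤ → G.phiB φ B x ≠ 0 := by
      intro B hB hposB x hxt h0
      obtain ⟨g, y, hg0, hgle, hgfin, hy, hyφ0, hyφt, hyterm⟩ := hgood x hxt
      have hterm : ENNReal.ofReal (g y) * G.phiB φ B y ≤ G.phiHat (G.phiB φ B) g := by
        unfold GradedGraph.phiHat
        exact Finset.single_le_sum (f := fun v => ENNReal.ofReal (g v) * G.phiB φ B v)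
          (fun i _ => zero_le) hy
      have h2 : G.phiHat (G.phiB φ B) g ≤ G.phiHat (G.phiB φ B) (Finsupp.single x 1) :=
        phiHat_phiB_mono hφ hB (single_one_nonneg x) hg0 hgle
      rw [phiHat_single, h0, mul_zero] at h2
      have h3 : ENNReal.ofReal (g y) * G.phiB φ B y = 0 :=
        le_antisymm (hterm.trans h2) (zero_le)
      rcases mul_eq_zero.mp h3 with h4 | h4
      · exact hyterm (by rw [h4, zero_mul])
      · exact hposB y hyφ0 hyφt h4
    set ψ : G.V → ℝ≥0∞ := G.phiB φ J₁ with hψdef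
    set φ' : G.V → ℝ≥0∞ := fun z => 2⁻¹ * ψ z + 2⁻¹ * φ z with hφ'def
    have hψle : ∀ x, ψ x ≤ φ x := hle₁
    have hsplit : ∀ u : G.V →₀ ℝ,
        G.phiHat φ' u = 2⁻¹ * G.phiHat ψ u + 2⁻¹ * G.phiHat φ u := by
      intro u
      simp only [phiHat, Finset.mul_sum, ← Finset.sum_add_distrib]
      refine Finset.sum_congr rfl fun x _ => ?_
      simp only [hφ'def]
      ring
    have hφ'le : ∀ x, φ' x ≤ φ x := by
      intro x
      simp only [hφ'def]
      calc 2⁻¹ * ψ x + 2⁻¹ * φ x ≤ 2⁻¹ * φ x + 2⁻¹ * φ x := by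
            gcongr
            exact hψle x
        _ = (2⁻¹ + 2⁻¹) * φ x := by rw [add_mul]
        _ = φ x := by rw [ENNReal.inv_two_add_inv_two, one_mul]
    have hharm' : G.Harmonic φ' := by
      intro z
      simp only [hφ'def]
      rw [hharm₁ z, hφ z, Finset.mul_sum, Finset.mul_sum, ← Finset.sum_add_distrib]
    have hhalf0 : (2⁻¹ : ℝ≥0∞) ≠ 0 := by norm_num
    have hhalft : (2⁻¹ : ℝ≥0∞) ≠ ⊤ := by norm_num
    have hsf' : G.Semifinite φ' := by
      constructor
      · refine ⟨x₀, ?_⟩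
        simp only [hφ'def]
        rw [hx₀, ENNReal.mul_top hhalf0, add_top]
      · intro f hf
        apply le_antisymm
        · by_cases hft : G.phiHat φ' f = ⊤
          · rw [hft]
            have hφft : G.phiHat φ f = ⊤ := by
              by_contra hne
              have h2 : G.phiHat ψ f ≤ G.phiHat φ f := phiHat_mono_left hψle f
              have h3 : G.phiHat φ' f ≠ ⊤ := by
                rw [hsplit f]
                exact ENNReal.add_ne_top.mpr
                  ⟨ENNReal.mul_ne_top hhalft (fun ht => hne (top_le_iff.mp (ht ▸ h2))),
                   ENNReal.mul_ne_top hhalft hne⟩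
              exact h3 hft
            rw [top_le_iff]
            by_contra hX
            have hle2 : G.phiHat φ f ≤ 2 * ⨆ g ∈ {g : G.V →₀ ℝ | (∀ v, 0 ≤ g v) ∧
                G.leK (G.kmk g) (G.kmk f) ∧ G.phiHat φ' g ≠ ⊤}, G.phiHat φ' g := by
              rw [hsem.2 f hf]
              refine iSup₂_le fun g hg => ?_
              obtain ⟨hg0, hgle, hgfin⟩ := hg
              have hmem : g ∈ {g : G.V →₀ ℝ | (∀ v, 0 ≤ g v) ∧
                  G.leK (G.kmk g) (G.kmk f) ∧ G.phiHat φ' g ≠ ⊤} :=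
                ⟨hg0, hgle, fun ht =>
                  hgfin (top_le_iff.mp (ht ▸ phiHat_mono_left hφ'le g))⟩
              have h1 : G.phiHat φ g ≤ 2 * G.phiHat φ' g := by
                rw [hsplit g]
                calc G.phiHat φ g = 2 * (2⁻¹ * G.phiHat φ g) := by
                      rw [← mul_assoc, ENNReal.mul_inv_cancel (by norm_num) (by norm_num),
                        one_mul]
                  _ ≤ 2 * (2⁻¹ * G.phiHat ψ g + 2⁻¹ * G.phiHat φ g) := by
                      gcongr
                      exact le_add_self
              exact h1.trans (by
                gcongr
                exact le_iSup₂_of_le g hmem le_rfl)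
            rw [hφft] at hle2
            exact (ENNReal.mul_ne_top (by norm_num) hX) (top_le_iff.mp hle2)
          · exact le_iSup₂_of_le f ⟨hf, leK_refl f, hft⟩ le_rfl
        · refine iSup₂_le fun g hg => ?_
          obtain ⟨hg0, hgle, hgfin⟩ := hg
          have hφgfin : G.phiHat φ g ≠ ⊤ := by
            intro ht
            apply hgfin
            rw [hsplit g, ht, ENNReal.mul_top hhalf0, add_top]
          have h1 : G.phiHat φ g ≤ G.phiHat φ f := by
            rw [hsem.2 f hf]
            exact le_iSup₂_of_le g ⟨hg0, hgle, hφgfin⟩ le_rfl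
          have h2 : G.phiHat ψ g ≤ G.phiHat ψ f :=
            phiHat_phiB_mono hφ hstar₁ hf hg0 hgle
          rw [hsplit g, hsplit f]
          gcongr
    have hnz' : φ' y₀ ≠ 0 := by
      simp only [hφ'def]
      intro h0
      rw [add_eq_zero] at h0
      exact hy₀0 (by
        have := h0.2
        rcases mul_eq_zero.mp this with h | h
        · exact absurd h hhalf0
        · exact h)
    obtain ⟨c, hc⟩ := hindec φ' hharm' (Or.inr hsf') hφ'le ⟨y₀, hy₀t, hnz'⟩
    by_cases hpos : ∃ y, φ y ≠ 0 ∧ φ y ≠ ⊤ ∧ ψ y ≠ 0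
    · -- S = J₁
      obtain ⟨y₁, hy₁0, hy₁t, hy₁ψ⟩ := hpos
      have hcy := hc y₁ hy₁t
      simp only [hφ'def] at hcy
      have hgt : (2⁻¹ : ℝ≥0∞) < (c : ℝ≥0∞) := by
        have hlt : 2⁻¹ * φ y₁ < 2⁻¹ * ψ y₁ + 2⁻¹ * φ y₁ := by
          rw [add_comm]
          exact ENNReal.lt_add_right (ENNReal.mul_ne_top hhalft hy₁t)
            (mul_ne_zero hhalf0 hy₁ψ)
        rw [hcy] at hlt
        exact (ENNReal.mul_lt_mul_iff_left hy₁0 hy₁t).mp hlt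
      have hposall : ∀ y, φ y ≠ 0 → φ y ≠ ⊤ → ψ y ≠ 0 := by
        intro y h0 ht hψ0
        have hcy2 := hc y ht
        simp only [hφ'def] at hcy2
        rw [hψ0, mul_zero, zero_add] at hcy2
        have hlt := (ENNReal.mul_lt_mul_iff_left h0 ht).mpr hgt
        rw [← hcy2] at hlt
        exact lt_irrefl _ hlt
      left
      refine Set.Subset.antisymm (fun x hx => ?_) hJ₁S
      have hne : ψ x ≠ 0 := by
        by_cases hxt : φ x = ⊤
        · exact htop J₁ hstar₁ hposall x hxt
        · exact hposall x hx hxt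
      by_contra hxJ
      exact hne (phiB_eq_zero _ hxJ)
    · push_neg at hpos
      right
      have hposall₂ : ∀ y, φ y ≠ 0 → φ y ≠ ⊤ → G.phiB φ J₂ y ≠ 0 := by
        intro y h0 ht h20
        have hco := le_phiB_add_phiB hφ hstar₁ hstar₂ hcov y
        rw [← hψdef] at hco
        rw [hpos y h0 ht, zero_add, h20] at hco
        exact h0 (le_antisymm hco (zero_le))
      refine Set.Subset.antisymm (fun x hx => ?_) hJ₂S
      have hne : G.phiB φ J₂ x ≠ 0 := by
        by_cases hxt : φ x = ⊤
        · exact htop J₂ hstar₂ hposall₂ x hxt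
        · exact hposall₂ x hx hxt
      by_contra hxJ
      exact hne (phiB_eq_zero _ hxJ)

end Zigzag
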